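/- Let A = (a_1, …, a_5) be 5 sequences in ℤ^ℓ and let x be a sum-MSC sequence for A. Then for all columns j and j', G_j(x) ∩ G_{j'}(x) ≠ ∅. -/
import Mathlib


/-- `a i` governs `x j` (w.r.t. the column medians `m`): `x j` is in the center,
or moving `x j` towards the center increases the distance to `a i`. -/
def Governs {ℓ : ℕ} (a : Fin 5 → Fin ℓ → ℤ) (m x : Fin ℓ → ℤ) (j : Fin ℓ) (i : Fin 5) : Prop :=
  x j = m j ∨ (x j < m j ∧ a i j ≤ x j) ∨ (m j < x j ∧ x j ≤ a i j)

/-- `G_j(x)`: the set of indices `i` such that `a i` governs `x j`. -/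
def GovSet {ℓ : ℕ} (a : Fin 5 → Fin ℓ → ℤ) (m x : Fin ℓ → ℤ) (j : Fin ℓ) : Set (Fin 5) :=
  {i | Governs a m x j i}

/-- Manhattan distance between two integer sequences of length `ℓ`. -/
def manhattanDist {ℓ : ℕ} (x y : Fin ℓ → ℤ) : ℤ := ∑ j, |x j - y j|

/-- Manhattan distance from a sequence to a collection of 5 sequences. -/
def manhattanDistA {ℓ : ℕ} (a : Fin 5 → Fin ℓ → ℤ) (x : Fin ℓ → ℤ) : ℤ :=
  Finset.univ.sup' ⟨0, Finset.mem_univ _⟩ fun i => manhattanDist x (a i)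

/-- `OPT(A)`: the optimal (minimal) distance to the collection. -/
noncomputable def manhattanOPT {ℓ : ℕ} (a : Fin 5 → Fin ℓ → ℤ) : ℤ :=
  sInf {d : ℤ | ∃ x : Fin ℓ → ℤ, manhattanDistA a x = d}

/-- A sum-MSC sequence: a Manhattan consensus sequence minimizing the sum of
distances among all Manhattan consensus sequences. -/
def IsSumMSC {ℓ : ℕ} (a : Fin 5 → Fin ℓ → ℤ) (x : Fin ℓ → ℤ) : Prop :=
  manhattanDistA a x = manhattanOPT a ∧
    ∀ y : Fin ℓ → ℤ, manhattanDistA a y = manhattanOPT a →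
      (∑ i, manhattanDist x (a i)) ≤ ∑ i, manhattanDist y (a i)

instance {ℓ : ℕ} (a : Fin 5 → Fin ℓ → ℤ) (m x : Fin ℓ → ℤ) (j : Fin ℓ) (i : Fin 5) :
    Decidable (Governs a m x j i) := by unfold Governs; exact inferInstance

lemma manhattanDist_nonneg {ℓ : ℕ} (x y : Fin ℓ → ℤ) : 0 ≤ manhattanDist x y :=
  Finset.sum_nonneg fun _ _ => abs_nonneg _

lemma OPT_le {ℓ : ℕ} (a : Fin 5 → Fin ℓ → ℤ) (y : Fin ℓ → ℤ) :
    manhattanOPT a ≤ manhattanDistA a y := by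
  apply csInf_le
  · refine ⟨0, ?_⟩
    rintro d ⟨z, rfl⟩
    have h0 : manhattanDist z (a 0) ≤ manhattanDistA a z := by
      unfold manhattanDistA
      exact Finset.le_sup' (fun i => manhattanDist z (a i)) (Finset.mem_univ (0 : Fin 5))
    exact le_trans (manhattanDist_nonneg z (a 0)) h0
  · exact ⟨y, rfl⟩

lemma dist_update {ℓ : ℕ} (x b : Fin ℓ → ℤ) (j : Fin ℓ) (v : ℤ) :
    manhattanDist (Function.update x j v) b
      = manhattanDist x b + (|v - b j| - |x j - b j|) := by
  unfold manhattanDist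
  have h : ∀ k ∈ Finset.univ, |Function.update x j v k - b k|
      = |x k - b k| + (if k = j then |v - b j| - |x j - b j| else 0) := by
    intro k _
    rcases eq_or_ne k j with rfl | hk
    · simp [Function.update_self]
    · simp [Function.update_of_ne hk, hk]
  rw [Finset.sum_congr rfl h, Finset.sum_add_distrib]
  simp [Finset.sum_ite_eq' Finset.univ j]

lemma column_delta {ℓ : ℕ} (a : Fin 5 → Fin ℓ → ℤ) (m x : Fin ℓ → ℤ) (j : Fin ℓ)
    (hne : x j ≠ m j) (i : Fin 5) :
    |x j + (if x j < m j then 1 else -1) - a i j| - |x j - a i j| =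
      if Governs a m x j i then 1 else -1 := by
  rcases lt_or_gt_of_ne hne with h | h
  · rw [if_pos h]
    by_cases hg : a i j ≤ x j
    · rw [if_pos (show Governs a m x j i from Or.inr (Or.inl ⟨h, hg⟩)),
        abs_of_nonneg (by omega), abs_of_nonneg (by omega)]
      ring
    · rw [if_neg (show ¬ Governs a m x j i by unfold Governs; rintro (h1|⟨_,h2⟩|⟨h3,_⟩) <;> omega),
        abs_of_nonpos (by omega), abs_of_nonpos (by omega)]
      ring
  · rw [if_neg (by omega)]
    by_cases hg : x j ≤ a i j
    · rw [if_pos (show Governs a m x j i from Or.inr (Or.inr ⟨h, hg⟩)),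
        abs_of_nonpos (by omega), abs_of_nonpos (by omega)]
      ring
    · rw [if_neg (show ¬ Governs a m x j i by unfold Governs; rintro (h1|⟨h2,_⟩|⟨_,h3⟩) <;> omega),
        abs_of_nonneg (by omega), abs_of_nonneg (by omega)]
      ring

lemma governs_pair {ℓ : ℕ} (a : Fin 5 → Fin ℓ → ℤ) (π : Fin ℓ → Equiv.Perm (Fin 5))
    (hπ : ∀ j, Monotone fun p => a (π j p) j) (m : Fin ℓ → ℤ) (hm : ∀ j, m j = a (π j 2) j)
    (x : Fin ℓ → ℤ) (j : Fin ℓ) (hne : x j ≠ m j) :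
    ∃ b c : Fin 5, ∀ i, Governs a m x j i → i = b ∨ i = c := by
  rcases lt_or_gt_of_ne hne with h | h
  · refine ⟨π j 0, π j 1, fun i hg => ?_⟩
    rcases hg with h1 | ⟨_, h2⟩ | ⟨h3, _⟩
    · exact absurd h1 (ne_of_lt h)
    · have hip : π j ((π j).symm i) = i := (π j).apply_symm_apply i
      have hlt : a (π j ((π j).symm i)) j < a (π j 2) j := by rw [hip, ← hm j]; omega
      have hp2 : ((π j).symm i : Fin 5) < 2 := by
        by_contra hcon
        push_neg at hcon
        have h2le : a (π j 2) j ≤ a (π j ((π j).symm i)) j := hπ j hcon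
        omega
      have hv : ((π j).symm i : Fin 5).val = 0 ∨ ((π j).symm i : Fin 5).val = 1 := by
        have := Fin.lt_def.mp hp2; omega
      rcases hv with hv | hv
      · left; rw [← hip]; congr 1; exact Fin.ext hv
      · right; rw [← hip]; congr 1; exact Fin.ext hv
    · omega
  · refine ⟨π j 3, π j 4, fun i hg => ?_⟩
    rcases hg with h1 | ⟨h2, _⟩ | ⟨_, h3⟩
    · exact absurd h1 (ne_of_gt h)
    · omega
    · have hip : π j ((π j).symm i) = i := (π j).apply_symm_apply i
      have hlt : a (π j 2) j < a (π j ((π j).symm i)) j := by rw [hip, ← hm j]; omega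
      have hp2 : (2 : Fin 5) < (π j).symm i := by
        by_contra hcon
        push_neg at hcon
        have h2le : a (π j ((π j).symm i)) j ≤ a (π j 2) j := hπ j hcon
        omega
      have hv : ((π j).symm i : Fin 5).val = 3 ∨ ((π j).symm i : Fin 5).val = 4 := by
        have := Fin.lt_def.mp hp2
        have := ((π j).symm i).isLt
        simp at *; omega
      rcases hv with hv | hv
      · left; rw [← hip]; congr 1; exact Fin.ext hv
      · right; rw [← hip]; congr 1; exact Fin.ext hv

lemma sum_delta_le (P : Fin 5 → Prop) [DecidablePred P] (b c : Fin 5)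
    (hP : ∀ i, P i → i = b ∨ i = c) :
    ∑ i, (if P i then (1:ℤ) else -1) ≤ -1 := by
  have hle : ∀ i ∈ Finset.univ, (if P i then (1:ℤ) else -1) ≤
      (if i = b then 2 else 0) + (if i = c then 2 else 0) - 1 := by
    intro i _
    by_cases h : P i
    · rcases hP i h with rfl | rfl <;> simp [h] <;> split_ifs <;> omega
    · simp only [if_neg h]; split_ifs <;> omega
  calc ∑ i, (if P i then (1:ℤ) else -1)
      ≤ ∑ i : Fin 5, ((if i = b then (2:ℤ) else 0) + (if i = c then 2 else 0) - 1) :=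
        Finset.sum_le_sum hle
    _ = -1 := by
        simp [Finset.sum_sub_distrib, Finset.sum_add_distrib,
          Finset.sum_ite_eq' Finset.univ]

lemma no_empty_gov {ℓ : ℕ} (a : Fin 5 → Fin ℓ → ℤ) (m x : Fin ℓ → ℤ)
    (hx1 : manhattanDistA a x = manhattanOPT a)
    (j : Fin ℓ) (hne : x j ≠ m j) (hG : ∀ i, ¬ Governs a m x j i) : False := by
  set ε : ℤ := if x j < m j then 1 else -1 with hε
  set y := Function.update x j (x j + ε) with hy
  have hyd : ∀ i, manhattanDist y (a i) = manhattanDist x (a i) - 1 := by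
    intro i
    have hd := column_delta a m x j hne i
    rw [if_neg (hG i), ← hε] at hd
    rw [hy, dist_update x (a i) j (x j + ε)]
    omega
  have h1 : manhattanDistA a y ≤ manhattanOPT a - 1 := by
    apply Finset.sup'_le
    intro i _
    rw [hyd i]
    have h2 : manhattanDist x (a i) ≤ manhattanDistA a x := by
      unfold manhattanDistA
      exact Finset.le_sup' (fun i => manhattanDist x (a i)) (Finset.mem_univ i)
    omega
  have h2 := OPT_le a y
  omega

lemma main_case {ℓ : ℕ} (a : Fin 5 → Fin ℓ → ℤ) (π : Fin ℓ → Equiv.Perm (Fin 5))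
    (hπ : ∀ j, Monotone fun p => a (π j p) j) (m : Fin ℓ → ℤ) (hm : ∀ j, m j = a (π j 2) j)
    (x : Fin ℓ → ℤ) (hx : IsSumMSC a x) (j j' : Fin ℓ) (hjj : j ≠ j')
    (hnej : x j ≠ m j) (hnej' : x j' ≠ m j')
    (hdisj : ∀ i, ¬(Governs a m x j i ∧ Governs a m x j' i)) : False := by
  set ε : ℤ := if x j < m j then 1 else -1 with hε
  set ε' : ℤ := if x j' < m j' then 1 else -1 with hε'
  set y := Function.update (Function.update x j (x j + ε)) j' (x j' + ε') with hy
  have hyd : ∀ i, manhattanDist y (a i) = manhattanDist x (a i)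
      + ((if Governs a m x j i then 1 else -1) + (if Governs a m x j' i then 1 else -1)) := by
    intro i
    have hd := column_delta a m x j hnej i
    have hd' := column_delta a m x j' hnej' i
    rw [← hε] at hd
    rw [← hε'] at hd'
    rw [hy, dist_update, Function.update_of_ne (Ne.symm hjj), dist_update, hd, hd']
    ring
  have hyle : ∀ i, manhattanDist y (a i) ≤ manhattanDist x (a i) := by
    intro i
    rw [hyd i]
    split_ifs with h1 h2
    · exact absurd ⟨h1, h2⟩ (hdisj i)
    · omega
    · omega
    · omega
  have hyOPT : manhattanDistA a y = manhattanOPT a := by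
    refine le_antisymm ?_ (OPT_le a y)
    rw [← hx.1]
    unfold manhattanDistA
    apply Finset.sup'_le
    intro i _
    exact le_trans (hyle i)
      (Finset.le_sup' (fun i => manhattanDist x (a i)) (Finset.mem_univ i))
  have hsum := hx.2 y hyOPT
  have hsy : ∑ i, manhattanDist y (a i)
      = ∑ i, manhattanDist x (a i)
        + ((∑ i, (if Governs a m x j i then (1:ℤ) else -1))
         + ∑ i, (if Governs a m x j' i then (1:ℤ) else -1)) := by
    rw [Finset.sum_congr rfl (fun i _ => hyd i), Finset.sum_add_distrib,
      Finset.sum_add_distrib]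
  obtain ⟨b, c, hbc⟩ := governs_pair a π hπ m hm x j hnej
  obtain ⟨b', c', hbc'⟩ := governs_pair a π hπ m hm x j' hnej'
  have h1 := sum_delta_le _ b c hbc
  have h2 := sum_delta_le _ b' c' hbc'
  omega

/-- for a sum-MSC sequence `x`, any two of the sets `G_j(x)` intersect. -/
theorem stmt9 {ℓ : ℕ} (a : Fin 5 → Fin ℓ → ℤ) (π : Fin ℓ → Equiv.Perm (Fin 5))
    (hπ : ∀ j, Monotone fun p => a (π j p) j)
    (m : Fin ℓ → ℤ) (hm : ∀ j, m j = a (π j 2) j)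
    (x : Fin ℓ → ℤ) (hx : IsSumMSC a x) (j j' : Fin ℓ) :
    (GovSet a m x j ∩ GovSet a m x j').Nonempty := by
  by_contra hc
  rw [Set.not_nonempty_iff_eq_empty] at hc
  have hdisj : ∀ i, ¬(Governs a m x j i ∧ Governs a m x j' i) := by
    intro i hi
    have hmem : i ∈ GovSet a m x j ∩ GovSet a m x j' := ⟨hi.1, hi.2⟩
    rw [hc] at hmem
    exact hmem
  by_cases h1 : x j = m j
  · by_cases h2 : x j' = m j'
    · exact absurd ⟨Or.inl h1, Or.inl h2⟩ (hdisj 0)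
    · exact (no_empty_gov a m x hx.1 j' h2 fun i hg => hdisj i ⟨Or.inl h1, hg⟩).elim
  · by_cases h2 : x j' = m j'
    · exact (no_empty_gov a m x hx.1 j h1 fun i hg => hdisj i ⟨hg, Or.inl h2⟩).elim
    · by_cases hjj : j = j'
      · subst hjj
        exact (no_empty_gov a m x hx.1 j h1 fun i hg => hdisj i ⟨hg, hg⟩).elim
      · exact (main_case a π hπ m hm x hx j j' hjj h1 h2 hdisj).elim
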